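/- Let (A^ℤ, F) be a cellular automaton, Σ a transitive subshift, and h', h'' bounded-variation curves along which F admits blocking words (equivalently, equicontinuous points). Then for every bounded-variation curve h with h' ≾ h ≾ h'', F also admits a blocking word (hence equicontinuous points) along h. -/

import Mathlib

open Classical

section Prelude

variable {A : Type*}

/-- The shift map on configurations. -/
def shift (x : ℤ → A) : ℤ → A := fun i => x (i + 1)

/-- The cylinder of the word `u` placed at position `p`. -/
def cylAt (u : List A) (p : ℤ) : Set (ℤ → A) :=
  {x | ∀ i : Fin u.length, x (p + ((i : ℕ) : ℤ)) = u.get i}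

/-- The region of consequences of a set of configurations. -/
def consSet (F : (ℤ → A) → (ℤ → A)) (X : Set (ℤ → A)) : Set (ℤ × ℕ) :=
  {q | ∀ x ∈ X, ∀ y ∈ X, F^[q.2] x q.1 = F^[q.2] y q.1}

/-- `F` is a cellular automaton with neighborhood `⟦r,s⟧`. -/
def IsCA (F : (ℤ → A) → (ℤ → A)) (r s : ℤ) : Prop :=
  (∀ x, F (shift x) = shift (F x)) ∧
  (∀ x y : ℤ → A, (∀ i : ℤ, r ≤ i → i ≤ s → x i = y i) → F x 0 = F y 0)

/-- A subshift: a closed shift-invariant set. -/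
def IsSubshift [TopologicalSpace A] (S : Set (ℤ → A)) : Prop :=
  IsClosed S ∧ shift '' S = S

/-- Two configurations agree on the centered window of radius `m`
(Cantor distance `< 2^{-m}`). -/
def close (m : ℕ) (x y : ℤ → A) : Prop := ∀ i : ℤ, |i| ≤ (m : ℤ) → x i = y i

/-- `y` is in the tube of radius `2^{-k}` along `h` around `x`:
for every time `n` the configurations `σ^{h n} ∘ F^n (x)` and `σ^{h n} ∘ F^n (y)`
agree on the window of radius `k`. -/
def tube (F : (ℤ → A) → (ℤ → A)) (h : ℕ → ℤ) (k : ℕ) (x y : ℤ → A) : Prop :=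
  ∀ n : ℕ, ∀ i : ℤ, |i| ≤ (k : ℤ) → F^[n] x (i + h n) = F^[n] y (i + h n)

/-- `x` is an equicontinuous point along `h` relative to `S`. -/
def eqPt (F : (ℤ → A) → (ℤ → A)) (S : Set (ℤ → A)) (h : ℕ → ℤ) (x : ℤ → A) : Prop :=
  ∀ k : ℕ, ∃ m : ℕ, ∀ y ∈ S, close m x y → tube F h k x y

/-- `F` is sensitive along `h` relative to `S`. -/
def sensitive (F : (ℤ → A) → (ℤ → A)) (S : Set (ℤ → A)) (h : ℕ → ℤ) : Prop :=
  ∃ k : ℕ, ∀ m : ℕ, ∀ x ∈ S, ∃ y ∈ S, close m x y ∧ ¬ tube F h k x y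

/-- `F` is right-expansive along `h` relative to `S`. -/
def rightExpansive (F : (ℤ → A) → (ℤ → A)) (S : Set (ℤ → A)) (h : ℕ → ℤ) : Prop :=
  ∃ k : ℕ, ∀ x ∈ S, ∀ y ∈ S, (∃ i : ℤ, 0 ≤ i ∧ x i ≠ y i) →
    ∀ z ∈ S, ¬ (tube F h k x z ∧ tube F h k y z)

/-- `F` is left-expansive along `h` relative to `S`. -/
def leftExpansive (F : (ℤ → A) → (ℤ → A)) (S : Set (ℤ → A)) (h : ℕ → ℤ) : Prop :=
  ∃ k : ℕ, ∀ x ∈ S, ∀ y ∈ S, (∃ i : ℤ, i ≤ 0 ∧ x i ≠ y i) →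
    ∀ z ∈ S, ¬ (tube F h k x z ∧ tube F h k y z)

/-- Curves with bounded variation. -/
def BV (h : ℕ → ℤ) : Prop := ∃ M : ℤ, 0 < M ∧ ∀ n : ℕ, |h (n + 1) - h n| ≤ M

/-- The preorder `h ≾ k` on curves. -/
def precsim (h k : ℕ → ℤ) : Prop := ∃ M : ℤ, 0 < M ∧ ∀ n : ℕ, h n ≤ k n + M

/-- The equivalence `h ∼ k` on curves. -/
def simEq (h k : ℕ → ℤ) : Prop := ∃ M : ℤ, 0 < M ∧ ∀ n : ℕ, k n - M ≤ h n ∧ h n ≤ k n + M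

/-- The word `u` belongs to the language of `S`. -/
def inLang (S : Set (ℤ → A)) (u : List A) : Prop := ∃ x ∈ S, x ∈ cylAt u 0

/-- Transitivity of a subshift, expressed on its language. -/
def transitiveSubshift (S : Set (ℤ → A)) : Prop :=
  ∀ u v : List A, inLang S u → inLang S v → ∃ w : List A, inLang S (u ++ w ++ v)

/-- `u` is a blocking word along `h` for the CA `F` of neighborhood `⟦r,s⟧`,
relative to the subshift `S`. -/
def blockingWord (F : (ℤ → A) → (ℤ → A)) (S : Set (ℤ → A)) (h : ℕ → ℤ) (r s : ℤ)
    (u : List A) : Prop :=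
  inLang S u ∧
  ∃ e : ℕ, 0 < e ∧
    (∀ n : ℕ, |h (n + 1) - h n| + s < (e : ℤ) ∧ |h (n + 1) - h n| - r < (e : ℤ)) ∧
    (e : ℤ) ≤ u.length ∧
    ∃ p : ℤ, {q : ℤ × ℕ | h q.2 ≤ q.1 ∧ q.1 < h q.2 + (e : ℤ)} ⊆ consSet F (S ∩ cylAt u p)

end Prelude

section Aux

variable {A : Type*}

/-- Translation by `c` (generalizing `shift`). -/
def trz (c : ℤ) (x : ℤ → A) : ℤ → A := fun i => x (i + c)

lemma trz_trz (a b : ℤ) (x : ℤ → A) : trz a (trz b x) = trz (a + b) x := by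
  funext i; simp [trz, add_assoc]

lemma trz_zero (x : ℤ → A) : trz 0 x = x := by funext i; simp [trz]

lemma F_trz {F : (ℤ → A) → (ℤ → A)} {r s : ℤ} (hF : IsCA F r s) :
    ∀ (c : ℤ) (x : ℤ → A), F (trz c x) = trz c (F x) := by
  have h1 : ∀ x : ℤ → A, F (trz 1 x) = trz 1 (F x) := fun x => hF.1 x
  have hm : ∀ x : ℤ → A, F (trz (-1) x) = trz (-1) (F x) := by
    intro x
    have h2 := h1 (trz (-1) x)
    rw [trz_trz] at h2
    norm_num [trz_zero] at h2
    rw [h2, trz_trz]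
    norm_num [trz_zero]
  intro c
  induction c using Int.induction_on with
  | zero => intro x; simp [trz_zero]
  | succ k ih =>
      intro x
      have e1 : trz ((k : ℤ) + 1) x = trz 1 (trz k x) := by rw [trz_trz, add_comm]
      rw [e1, h1, ih, trz_trz, add_comm]
  | pred k ih =>
      intro x
      have e1 : trz (-(k : ℤ) - 1) x = trz (-1) (trz (-k) x) := by
        rw [trz_trz]; ring_nf
      rw [e1, hm, ih, trz_trz]; ring_nf

lemma iter_trz {F : (ℤ → A) → (ℤ → A)} {r s : ℤ} (hF : IsCA F r s) (n : ℕ) (c : ℤ)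
    (x : ℤ → A) : F^[n] (trz c x) = trz c (F^[n] x) := by
  induction n with
  | zero => rfl
  | succ n ih => rw [Function.iterate_succ_apply', Function.iterate_succ_apply', ih, F_trz hF]

lemma loc_CA {F : (ℤ → A) → (ℤ → A)} {r s : ℤ} (hF : IsCA F r s) (z w : ℤ → A) (j : ℤ)
    (hag : ∀ i, j + r ≤ i → i ≤ j + s → z i = w i) : F z j = F w j := by
  have hz : F z j = F (trz j z) 0 := by rw [F_trz hF]; simp [trz]
  have hw : F w j = F (trz j w) 0 := by rw [F_trz hF]; simp [trz]
  rw [hz, hw]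
  exact hF.2 _ _ (fun i hi1 hi2 => hag (i + j) (by omega) (by omega))

lemma mem_trz {S : Set (ℤ → A)} (hS : shift '' S = S) :
    ∀ c : ℤ, ∀ x ∈ S, trz c x ∈ S := by
  have h1 : ∀ x ∈ S, trz 1 x ∈ S := by
    intro x hx
    have : shift x ∈ shift '' S := Set.mem_image_of_mem shift hx
    rwa [hS] at this
  have hm : ∀ x ∈ S, trz (-1) x ∈ S := by
    intro x hx
    rw [← hS] at hx
    obtain ⟨y, hy, rfl⟩ := hx
    have : trz (-1) (shift y) = y := by
      funext i; show y (i + -1 + 1) = y i; norm_num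
    rw [this]; exact hy
  intro c
  induction c using Int.induction_on with
  | zero => intro x hx; rwa [trz_zero]
  | succ k ih =>
      intro x hx
      have h2 := h1 (trz k x) (ih x hx)
      rwa [trz_trz, add_comm] at h2
  | pred k ih =>
      intro x hx
      have h2 := hm (trz (-k) x) (ih x hx)
      rw [trz_trz] at h2
      rwa [show (-1 : ℤ) + -k = -k - 1 by ring] at h2

lemma mem_cylAt {v : List A} {q : ℤ} {x : ℤ → A} :
    x ∈ cylAt v q ↔ ∀ i : ℕ, ∀ hi : i < v.length, x (q + i) = v[i] := by
  constructor
  · intro hx i hi; exact hx ⟨i, hi⟩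
  · intro hx i; exact hx i i.2

lemma trz_mem_cylAt {v : List A} {q c : ℤ} {x : ℤ → A} :
    trz c x ∈ cylAt v q ↔ x ∈ cylAt v (q + c) := by
  rw [mem_cylAt, mem_cylAt]
  constructor
  · intro hx i hi
    have h2 := hx i hi
    rw [show q + c + (i : ℤ) = q + (i : ℤ) + c by ring]
    exact h2
  · intro hx i hi
    show x (q + (i : ℤ) + c) = v[i]
    rw [show q + (i : ℤ) + c = q + c + (i : ℤ) by ring]
    exact hx i hi

lemma consSet_anti {F : (ℤ → A) → (ℤ → A)} {X Y : Set (ℤ → A)} (hXY : X ⊆ Y) :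
    consSet F Y ⊆ consSet F X :=
  fun _ hq x hx y hy => hq x (hXY hx) y (hXY hy)

lemma strip_shift {F : (ℤ → A) → (ℤ → A)} {r s : ℤ} (hF : IsCA F r s)
    {S : Set (ℤ → A)} (hS : shift '' S = S) {v : List A} {q : ℤ} {g : ℕ → ℤ} {e : ℤ}
    (hcons : ∀ (n : ℕ) (q1 : ℤ), g n ≤ q1 → q1 < g n + e →
      (q1, n) ∈ consSet F (S ∩ cylAt v q))
    (c : ℤ) {x y : ℤ → A} (hxS : x ∈ S) (hxc : x ∈ cylAt v (q + c))
    (hyS : y ∈ S) (hyc : y ∈ cylAt v (q + c)) :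
    ∀ (n : ℕ) (q1 : ℤ), g n + c ≤ q1 → q1 < g n + c + e → F^[n] x q1 = F^[n] y q1 := by
  intro n q1 hq1 hq2
  have hx' : trz c x ∈ S ∩ cylAt v q := ⟨mem_trz hS c x hxS, trz_mem_cylAt.mpr hxc⟩
  have hy' : trz c y ∈ S ∩ cylAt v q := ⟨mem_trz hS c y hyS, trz_mem_cylAt.mpr hyc⟩
  have h3 := hcons n (q1 - c) (by omega) (by omega) (trz c x) hx' (trz c y) hy'
  rw [iter_trz hF, iter_trz hF] at h3
  simpa [trz] using h3

/-- The word read off a configuration on a window. -/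
def wordOf (x : ℤ → A) (a : ℤ) (len : ℕ) : List A :=
  (List.range len).map fun i : ℕ => x (a + (i : ℤ))

lemma wordOf_length (x : ℤ → A) (a : ℤ) (len : ℕ) : (wordOf x a len).length = len := by
  rw [wordOf, List.length_map, List.length_range]

lemma wordOf_get (x : ℤ → A) (a : ℤ) (len : ℕ) (i : ℕ) (hi : i < (wordOf x a len).length) :
    (wordOf x a len)[i] = x (a + i) := by
  simp only [wordOf, List.getElem_map, List.getElem_range]

lemma mem_cylAt_wordOf (x : ℤ → A) (a : ℤ) (len : ℕ) : x ∈ cylAt (wordOf x a len) a := by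
  rw [mem_cylAt]; intro i hi; rw [wordOf_get]

lemma inLang_wordOf {S : Set (ℤ → A)} (hS : shift '' S = S) {x : ℤ → A} (hx : x ∈ S)
    (a : ℤ) (len : ℕ) : inLang S (wordOf x a len) := by
  refine ⟨trz a x, mem_trz hS a x hx, ?_⟩
  rw [mem_cylAt]
  intro i hi
  show x ((0 : ℤ) + i + a) = _
  rw [wordOf_get]
  congr 1
  ring

lemma cylAt_wordOf_subset {x : ℤ → A} {a : ℤ} {len : ℕ} {v : List A} {q : ℤ}
    (h1 : a ≤ q) (h2 : q + v.length ≤ a + len) (hx : x ∈ cylAt v q) :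
    cylAt (wordOf x a len) a ⊆ cylAt v q := by
  intro y hy
  rw [mem_cylAt] at hx hy ⊢
  intro i hi
  have hilen : (i : ℤ) < v.length := by exact_mod_cast hi
  have hbound : (q - a).toNat + i < (wordOf x a len).length := by
    rw [wordOf_length]; omega
  have h3 := hy ((q - a).toNat + i) hbound
  rw [wordOf_get] at h3
  have hidx : q + (i : ℤ) = a + (((q - a).toNat + i : ℕ) : ℤ) := by push_cast; omega
  rw [hidx, h3, ← hidx]
  exact hx i hi

lemma cylAt_append_left (v w : List A) (q : ℤ) : cylAt (v ++ w) q ⊆ cylAt v q := by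
  intro x hx
  rw [mem_cylAt] at hx ⊢
  intro i hi
  have h3 := hx i (by simp; omega)
  rwa [List.getElem_append_left hi] at h3

lemma cylAt_append_right (v w : List A) (q : ℤ) :
    cylAt (v ++ w) q ⊆ cylAt w (q + v.length) := by
  intro x hx
  rw [mem_cylAt] at hx ⊢
  intro i hi
  have h3 := hx (v.length + i) (by simp; omega)
  rw [List.getElem_append_right (by omega)] at h3
  have hidx : q + (v.length : ℤ) + (i : ℤ) = q + ((v.length + i : ℕ) : ℤ) := by push_cast; ring
  rw [hidx, h3]
  congr 1
  omega

lemma eq_on_cyl {v : List A} {q : ℤ} {x y : ℤ → A} (hx : x ∈ cylAt v q) (hy : y ∈ cylAt v q)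
    (j : ℤ) (h1 : q ≤ j) (h2 : j < q + v.length) : x j = y j := by
  rw [mem_cylAt] at hx hy
  have hj : j = q + ((j - q).toNat : ℤ) := by omega
  have hb : (j - q).toNat < v.length := by omega
  rw [hj, hx _ hb, hy _ hb]

/-- The two-walls lemma: between two blocking strips, everything is determined. -/
lemma core_lemma {F : (ℤ → A) → (ℤ → A)} {r s : ℤ} (hF : IsCA F r s)
    (x y : ℤ → A) (L R : ℕ → ℤ) (e₁ e₂ : ℤ)
    (hv1 : ∀ n, |L (n + 1) - L n| + s < e₁ ∧ |L (n + 1) - L n| - r < e₁)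
    (hv2 : ∀ n, |R (n + 1) - R n| + s < e₂ ∧ |R (n + 1) - R n| - r < e₂)
    (hL : ∀ n q1, L n ≤ q1 → q1 < L n + e₁ → F^[n] x q1 = F^[n] y q1)
    (hR : ∀ n q1, R n ≤ q1 → q1 < R n + e₂ → F^[n] x q1 = F^[n] y q1)
    (hbase : ∀ q1, L 0 ≤ q1 → q1 < R 0 + e₂ → x q1 = y q1) :
    ∀ n q1, L n ≤ q1 → q1 < R n + e₂ → F^[n] x q1 = F^[n] y q1 := by
  intro n
  induction n with
  | zero => intro q1 hq1 hq2; simpa using hbase q1 hq1 hq2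
  | succ n ih =>
      intro q1 hq1 hq2
      by_cases hA : q1 + r < L n
      · have h3 : L n - L (n + 1) ≤ |L (n + 1) - L n| := by
          rw [abs_sub_comm]; exact le_abs_self _
        have h4 := (hv1 n).2
        exact hL (n + 1) q1 hq1 (by omega)
      · by_cases hB : R n + e₂ ≤ q1 + s
        · have h3 : R (n + 1) - R n ≤ |R (n + 1) - R n| := le_abs_self _
          have h4 := (hv2 n).1
          exact hR (n + 1) q1 (by omega) hq2
        · rw [Function.iterate_succ_apply', Function.iterate_succ_apply']
          apply loc_CA hF
          intro i hi1 hi2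
          exact ih i (by omega) (by omega)

/-- Convexity: construction of a blocking word along `h`. -/
lemma exists_blocking {F : (ℤ → A) → (ℤ → A)} {r s : ℤ} (hF : IsCA F r s)
    {S : Set (ℤ → A)} (hS2 : shift '' S = S) (htrans : transitiveSubshift S)
    {h' h h'' : ℕ → ℤ} (hb : BV h) (h1 : precsim h' h) (h2 : precsim h h'')
    {u' u'' : List A}
    (hw' : blockingWord F S h' r s u') (hw'' : blockingWord F S h'' r s u'') :
    ∃ u : List A, blockingWord F S h r s u := by
  obtain ⟨Mh, hMh0, hMhv⟩ := hb
  obtain ⟨M1, hM10, hM1v⟩ := h1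
  obtain ⟨M2, hM20, hM2v⟩ := h2
  obtain ⟨hl', e', he'0, hv', hel', p', hcons'⟩ := hw'
  obtain ⟨hl'', e'', he''0, hv'', hel'', p'', hcons''⟩ := hw''
  have har := abs_nonneg r
  have has := abs_nonneg s
  set e : ℕ := (Mh + |r| + |s| + 1).toNat with hedef
  have heZ : (e : ℤ) = Mh + |r| + |s| + 1 := Int.toNat_of_nonneg (by linarith)
  have hepos : 0 < e := by
    have h3 : (0 : ℤ) < (e : ℤ) := by rw [heZ]; linarith
    exact_mod_cast h3
  have hvar : ∀ n : ℕ, |h (n + 1) - h n| + s < (e : ℤ) ∧ |h (n + 1) - h n| - r < (e : ℤ) := by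
    intro n
    have hD := hMhv n
    have hs1 := le_abs_self s
    have hr1 := neg_abs_le r
    constructor <;> rw [heZ] <;> linarith
  -- a configuration containing `u'` at `p'`
  obtain ⟨z', hz'S, hz'c⟩ := hl'
  have hx'S : trz (-p') z' ∈ S := mem_trz hS2 _ _ hz'S
  have hx'c : trz (-p') z' ∈ cylAt u' p' :=
    trz_mem_cylAt.mpr (by rw [show p' + -p' = (0 : ℤ) by ring]; exact hz'c)
  set a1 : ℤ := min p' (h' 0) with ha1def
  set b1 : ℤ := max (p' + (u'.length : ℤ)) (h' 0 + (e' : ℤ)) with hb1def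
  have ha1p : a1 ≤ p' := min_le_left _ _
  have ha1h : a1 ≤ h' 0 := min_le_right _ _
  have hb1p : p' + (u'.length : ℤ) ≤ b1 := le_max_left _ _
  have hb1h : h' 0 + (e' : ℤ) ≤ b1 := le_max_right _ _
  set len1 : ℕ := (b1 - a1).toNat with hlen1def
  have hlen1 : (len1 : ℤ) = b1 - a1 := Int.toNat_of_nonneg (by omega)
  set U1 : List A := wordOf (trz (-p') z') a1 len1 with hU1def
  have hsub1 : cylAt U1 a1 ⊆ cylAt u' p' := by
    refine cylAt_wordOf_subset ha1p (by omega) hx'c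
  have hU1len : (U1.length : ℤ) = b1 - a1 := by rw [hU1def, wordOf_length]; exact hlen1
  have hLang1 : inLang S U1 := inLang_wordOf hS2 hx'S a1 len1
  -- position of the new word
  set p : ℤ := a1 - M1 with hpdef
  -- a configuration containing `u''` at `p''`
  obtain ⟨z'', hz''S, hz''c⟩ := hl''
  have hx''S : trz (-p'') z'' ∈ S := mem_trz hS2 _ _ hz''S
  have hx''c : trz (-p'') z'' ∈ cylAt u'' p'' :=
    trz_mem_cylAt.mpr (by rw [show p'' + -p'' = (0 : ℤ) by ring]; exact hz''c)
  set a2 : ℤ := min (min p'' (h'' 0))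
    (min (p + (len1 : ℤ) - M2 - (e : ℤ)) (h'' 0 + (e'' : ℤ) - (e : ℤ))) with ha2def
  have ha2p : a2 ≤ p'' := le_trans (min_le_left _ _) (min_le_left _ _)
  have ha2h : a2 ≤ h'' 0 := le_trans (min_le_left _ _) (min_le_right _ _)
  have ha2c : a2 ≤ p + (len1 : ℤ) - M2 - (e : ℤ) := le_trans (min_le_right _ _) (min_le_left _ _)
  have ha2e : a2 ≤ h'' 0 + (e'' : ℤ) - (e : ℤ) := le_trans (min_le_right _ _) (min_le_right _ _)
  set b2 : ℤ := max (p'' + (u''.length : ℤ)) (h'' 0 + (e'' : ℤ)) with hb2def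
  have hb2p : p'' + (u''.length : ℤ) ≤ b2 := le_max_left _ _
  have hb2h : h'' 0 + (e'' : ℤ) ≤ b2 := le_max_right _ _
  set len2 : ℕ := (b2 - a2).toNat with hlen2def
  have hlen2 : (len2 : ℤ) = b2 - a2 := Int.toNat_of_nonneg (by omega)
  set U2 : List A := wordOf (trz (-p'') z'') a2 len2 with hU2def
  have hsub2 : cylAt U2 a2 ⊆ cylAt u'' p'' := by
    refine cylAt_wordOf_subset ha2p (by omega) hx''c
  have hU2len : (U2.length : ℤ) = b2 - a2 := by rw [hU2def, wordOf_length]; exact hlen2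
  have hLang2 : inLang S U2 := inLang_wordOf hS2 hx''S a2 len2
  obtain ⟨w, hwLang⟩ := htrans U1 U2 hLang1 hLang2
  have hlentot : ((U1 ++ w ++ U2).length : ℤ) = (U1.length : ℤ) + w.length + U2.length := by
    simp only [List.length_append]; push_cast; ring
  refine ⟨U1 ++ w ++ U2, hwLang, e, hepos, hvar, ?_, p, ?_⟩
  · rw [hlentot]
    have hw0 : (0 : ℤ) ≤ (w.length : ℤ) := Int.natCast_nonneg _
    have hU10 : (0 : ℤ) ≤ (U1.length : ℤ) := Int.natCast_nonneg _
    linarith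
  · rintro ⟨q1, n⟩ ⟨hq1, hq2⟩ x hx y hy
    obtain ⟨hxS, hxc⟩ := hx
    obtain ⟨hyS, hyc⟩ := hy
    have hconsU1 : ∀ (m : ℕ) (q2 : ℤ), h' m ≤ q2 → q2 < h' m + (e' : ℤ) →
        (q2, m) ∈ consSet F (S ∩ cylAt U1 a1) := fun m q2 hA hB =>
      consSet_anti (Set.inter_subset_inter (subset_refl S) hsub1) (hcons' ⟨hA, hB⟩)
    have hconsU2 : ∀ (m : ℕ) (q2 : ℤ), h'' m ≤ q2 → q2 < h'' m + (e'' : ℤ) →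
        (q2, m) ∈ consSet F (S ∩ cylAt U2 a2) := fun m q2 hA hB =>
      consSet_anti (Set.inter_subset_inter (subset_refl S) hsub2) (hcons'' ⟨hA, hB⟩)
    set c2 : ℤ := p + (U1.length : ℤ) + (w.length : ℤ) - a2 with hc2def
    have hpos1 : a1 + (p - a1) = p := by ring
    have hpos2 : a2 + c2 = p + ((U1 ++ w).length : ℤ) := by
      simp only [List.length_append]; push_cast; ring
    have hxc1 : x ∈ cylAt U1 (a1 + (p - a1)) := by
      rw [hpos1]; exact cylAt_append_left _ _ _ (cylAt_append_left _ _ _ hxc)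
    have hyc1 : y ∈ cylAt U1 (a1 + (p - a1)) := by
      rw [hpos1]; exact cylAt_append_left _ _ _ (cylAt_append_left _ _ _ hyc)
    have hxc2 : x ∈ cylAt U2 (a2 + c2) := by
      rw [hpos2]; exact cylAt_append_right _ _ _ hxc
    have hyc2 : y ∈ cylAt U2 (a2 + c2) := by
      rw [hpos2]; exact cylAt_append_right _ _ _ hyc
    have hWL := strip_shift hF hS2 hconsU1 (p - a1) hxS hxc1 hyS hyc1
    have hWR := strip_shift hF hS2 hconsU2 c2 hxS hxc2 hyS hyc2
    have hbase : ∀ q2 : ℤ, h' 0 + (p - a1) ≤ q2 → q2 < (h'' 0 + c2) + (e'' : ℤ) →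
        x q2 = y q2 := by
      intro q2 hA hB
      refine eq_on_cyl hxc hyc q2 (by linarith) ?_
      rw [hlentot]
      linarith [hU2len, hb2h]
    have hv1 : ∀ m : ℕ, |(h' (m + 1) + (p - a1)) - (h' m + (p - a1))| + s < (e' : ℤ) ∧
        |(h' (m + 1) + (p - a1)) - (h' m + (p - a1))| - r < (e' : ℤ) := by
      intro m
      rw [show (h' (m + 1) + (p - a1)) - (h' m + (p - a1)) = h' (m + 1) - h' m by ring]
      exact hv' m
    have hv2 : ∀ m : ℕ, |(h'' (m + 1) + c2) - (h'' m + c2)| + s < (e'' : ℤ) ∧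
        |(h'' (m + 1) + c2) - (h'' m + c2)| - r < (e'' : ℤ) := by
      intro m
      rw [show (h'' (m + 1) + c2) - (h'' m + c2) = h'' (m + 1) - h'' m by ring]
      exact hv'' m
    have hcore := core_lemma hF x y (fun m => h' m + (p - a1)) (fun m => h'' m + c2)
      (e' : ℤ) (e'' : ℤ) hv1 hv2 hWL hWR hbase
    have hg1 : h' n + (p - a1) ≤ q1 := by
      have h3 := hM1v n; simp only at hq1; linarith
    have hg2 : q1 < (h'' n + c2) + (e'' : ℤ) := by
      have h3 := hM2v n
      have h4 : (M2 : ℤ) + (e : ℤ) ≤ c2 := by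
        have hw0 : (0 : ℤ) ≤ (w.length : ℤ) := Int.natCast_nonneg _
        rw [hc2def]; linarith [hU1len, hlen1, ha2c]
      have he''0' : (0 : ℤ) < (e'' : ℤ) := by exact_mod_cast he''0
      simp only at hq2; linarith
    exact hcore n q1 hg1 hg2

/-- Existence of an equicontinuous point from a blocking word. -/
lemma eqpt_of_blocking [Fintype A] [TopologicalSpace A] [DiscreteTopology A]
    {F : (ℤ → A) → (ℤ → A)} {r s : ℤ} (hF : IsCA F r s)
    {S : Set (ℤ → A)} (hScl : IsClosed S) (hS2 : shift '' S = S)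
    (htrans : transitiveSubshift S) {h : ℕ → ℤ} {u : List A}
    (hbw : blockingWord F S h r s u) : ∃ x ∈ S, eqPt F S h x := by
  obtain ⟨hLang, e, hepos, hvar, helen, p, hcons⟩ := hbw
  have hconsP : ∀ (n : ℕ) (q1 : ℤ), h n ≤ q1 → q1 < h n + (e : ℤ) →
      (q1, n) ∈ consSet F (S ∩ cylAt u p) := fun n q1 hA hB => hcons ⟨hA, hB⟩
  have he1 : (1 : ℤ) ≤ (e : ℤ) := by exact_mod_cast hepos
  have hu1 : 1 ≤ u.length := by
    have h3 : (1 : ℤ) ≤ (u.length : ℤ) := le_trans he1 helen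
    exact_mod_cast h3
  -- the recursive extension step
  have step : ∀ t : {Vb : List A × ℤ // inLang S Vb.1},
      ∃ t' : {Vb : List A × ℤ // inLang S Vb.1},
      cylAt t'.1.1 t'.1.2 ⊆ cylAt t.1.1 t.1.2 ∧
      t'.1.2 + 1 ≤ t.1.2 ∧
      t.1.2 + (t.1.1.length : ℤ) + 1 ≤ t'.1.2 + (t'.1.1.length : ℤ) ∧
      cylAt t'.1.1 t'.1.2 ⊆ cylAt u t'.1.2 ∧
      cylAt t'.1.1 t'.1.2 ⊆ cylAt u (t'.1.2 + (t'.1.1.length : ℤ) - (u.length : ℤ)) := by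
    rintro ⟨⟨V, b⟩, hV⟩
    obtain ⟨w2, hw2⟩ := htrans V u hV hLang
    obtain ⟨w1, hw1⟩ := htrans u (V ++ w2 ++ u) hLang hw2
    refine ⟨⟨(u ++ w1 ++ (V ++ w2 ++ u), b - (u.length : ℤ) - (w1.length : ℤ)), hw1⟩,
      ?_, ?_, ?_, ?_, ?_⟩
    · intro x hx
      have h3 := cylAt_append_right (u ++ w1) (V ++ w2 ++ u) _ hx
      have h4 := cylAt_append_left V w2 _ (cylAt_append_left (V ++ w2) u _ h3)
      have hpos : b - (u.length : ℤ) - (w1.length : ℤ) + ((u ++ w1).length : ℤ) = b := by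
        simp only [List.length_append]; push_cast; ring
      rwa [hpos] at h4
    · simp only; omega
    · simp only [List.length_append]; push_cast; omega
    · intro x hx
      exact cylAt_append_left u w1 _ (cylAt_append_left (u ++ w1) (V ++ w2 ++ u) _ hx)
    · intro x hx
      have h3 := cylAt_append_right (u ++ w1) (V ++ w2 ++ u) _ hx
      have h4 := cylAt_append_right (V ++ w2) u _ h3
      have hpos : b - (u.length : ℤ) - (w1.length : ℤ) + ((u ++ w1).length : ℤ) +
          ((V ++ w2).length : ℤ) =
          b - (u.length : ℤ) - (w1.length : ℤ) +
            (((u ++ w1 ++ (V ++ w2 ++ u)).length : ℤ)) - (u.length : ℤ) := by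
        simp only [List.length_append]; push_cast; ring
      rwa [hpos] at h4
  choose f hf1 hf2 hf3 hf4 hf5 using step
  let g : ℕ → {Vb : List A × ℤ // inLang S Vb.1} :=
    fun k => Nat.rec ⟨(u, p), hLang⟩ (fun _ t => f t) k
  have hgs : ∀ k, g (k + 1) = f (g k) := fun k => rfl
  have hg0 : g 0 = ⟨(u, p), hLang⟩ := rfl
  have hnest : ∀ k, cylAt (g (k + 1)).1.1 (g (k + 1)).1.2 ⊆ cylAt (g k).1.1 (g k).1.2 := by
    intro k; rw [hgs]; exact hf1 (g k)
  have hb_le : ∀ k : ℕ, (g k).1.2 ≤ p - (k : ℤ) := by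
    intro k; induction k with
    | zero => rw [hg0]; simp
    | succ k ih =>
        rw [hgs]
        have h3 := hf2 (g k)
        push_cast
        omega
  have hrt : ∀ k : ℕ, p + (k : ℤ) ≤ (g k).1.2 + ((g k).1.1.length : ℤ) - (u.length : ℤ) := by
    intro k; induction k with
    | zero => rw [hg0]; simp
    | succ k ih =>
        rw [hgs]
        have h3 := hf3 (g k)
        push_cast
        omega
  have hcyl_l : ∀ k, cylAt (g k).1.1 (g k).1.2 ⊆ cylAt u (g k).1.2 := by
    intro k
    cases k with
    | zero => exact fun x hx => hx
    | succ k => rw [hgs]; exact hf4 (g k)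
  have hcyl_r : ∀ k, cylAt (g k).1.1 (g k).1.2 ⊆
      cylAt u ((g k).1.2 + ((g k).1.1.length : ℤ) - (u.length : ℤ)) := by
    intro k
    cases k with
    | zero =>
        rw [hg0]
        intro x hx
        have hpos : ((⟨(u, p), hLang⟩ : {Vb : List A × ℤ // inLang S Vb.1}).1.2 +
            (((⟨(u, p), hLang⟩ : {Vb : List A × ℤ // inLang S Vb.1}).1.1.length : ℤ)) -
            (u.length : ℤ)) = p := by simp
        rw [hpos]; exact hx
    | succ k => rw [hgs]; exact hf5 (g k)
  have hclosed : ∀ (v : List A) (q : ℤ), IsClosed (cylAt v q) := by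
    intro v q
    have h3 : cylAt v q = ⋂ i : Fin v.length,
        (fun x : ℤ → A => x (q + ((i : ℕ) : ℤ))) ⁻¹' {v.get i} := by
      ext x; simp [cylAt, Set.mem_iInter, Set.mem_preimage]
    rw [h3]
    exact isClosed_iInter fun i => IsClosed.preimage (continuous_apply _) (isClosed_discrete _)
  have hCne : ∀ k, (S ∩ cylAt (g k).1.1 (g k).1.2).Nonempty := by
    intro k
    obtain ⟨z, hzS, hzc⟩ := (g k).2
    exact ⟨trz (-(g k).1.2) z, mem_trz hS2 _ _ hzS,
      trz_mem_cylAt.mpr (by rw [show (g k).1.2 + -(g k).1.2 = (0 : ℤ) by ring]; exact hzc)⟩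
  have hCcl : ∀ k, IsClosed (S ∩ cylAt (g k).1.1 (g k).1.2) := fun k => hScl.inter (hclosed _ _)
  have hnonempty : (⋂ k, S ∩ cylAt (g k).1.1 (g k).1.2).Nonempty :=
    IsCompact.nonempty_iInter_of_sequence_nonempty_isCompact_isClosed _
      (fun k => Set.inter_subset_inter (subset_refl S) (hnest k)) hCne
      ((hCcl 0).isCompact) hCcl
  obtain ⟨x, hxmem⟩ := hnonempty
  have hxS : x ∈ S := (Set.mem_iInter.mp hxmem 0).1
  have hxcyl : ∀ k, x ∈ cylAt (g k).1.1 (g k).1.2 := fun k => (Set.mem_iInter.mp hxmem k).2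
  refine ⟨x, hxS, ?_⟩
  intro k
  set tL : ℤ := (g k).1.2 with htLdef
  set tR : ℤ := (g k).1.2 + ((g k).1.1.length : ℤ) - (u.length : ℤ) with htRdef
  have hxl : x ∈ cylAt u tL := hcyl_l k (hxcyl k)
  have hxr : x ∈ cylAt u tR := hcyl_r k (hxcyl k)
  have htL : tL ≤ p - (k : ℤ) := hb_le k
  have htR : p + (k : ℤ) ≤ tR := hrt k
  set m : ℕ := (|tL| + |tR| + (u.length : ℤ) + |h 0| + |p| + (e : ℤ) + (k : ℤ)).toNat with hmdef
  have hm : (m : ℤ) = |tL| + |tR| + (u.length : ℤ) + |h 0| + |p| + (e : ℤ) + (k : ℤ) :=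
    Int.toNat_of_nonneg (by positivity)
  refine ⟨m, ?_⟩
  intro y hyS hclose
  have hagree : ∀ j : ℤ, -(m : ℤ) ≤ j → j ≤ (m : ℤ) → x j = y j :=
    fun j hj1 hj2 => hclose j (abs_le.mpr ⟨hj1, hj2⟩)
  have ht1 := le_abs_self tL
  have ht2 := neg_abs_le tL
  have ht3 := le_abs_self tR
  have ht4 := neg_abs_le tR
  have ht5 := le_abs_self (h 0)
  have ht6 := neg_abs_le (h 0)
  have ht7 := le_abs_self p
  have ht8 := neg_abs_le p
  have htn1 := abs_nonneg tL
  have htn2 := abs_nonneg tR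
  have htn3 := abs_nonneg (h 0)
  have htn4 := abs_nonneg p
  have hk0 : (0 : ℤ) ≤ (k : ℤ) := Int.natCast_nonneg _
  have hul0 : (0 : ℤ) ≤ (u.length : ℤ) := Int.natCast_nonneg _
  have hyl : y ∈ cylAt u tL := by
    rw [mem_cylAt] at hxl ⊢
    intro i hi
    have hiz : (i : ℤ) < (u.length : ℤ) := by exact_mod_cast hi
    have hi0 : (0 : ℤ) ≤ (i : ℤ) := Int.natCast_nonneg _
    rw [← hagree (tL + (i : ℤ)) (by linarith) (by linarith)]
    exact hxl i hi
  have hyr : y ∈ cylAt u tR := by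
    rw [mem_cylAt] at hxr ⊢
    intro i hi
    have hiz : (i : ℤ) < (u.length : ℤ) := by exact_mod_cast hi
    have hi0 : (0 : ℤ) ≤ (i : ℤ) := Int.natCast_nonneg _
    rw [← hagree (tR + (i : ℤ)) (by linarith) (by linarith)]
    exact hxr i hi
  have hL := strip_shift hF hS2 hconsP (tL - p) hxS
    (by rw [show p + (tL - p) = tL by ring]; exact hxl) hyS
    (by rw [show p + (tL - p) = tL by ring]; exact hyl)
  have hR := strip_shift hF hS2 hconsP (tR - p) hxS
    (by rw [show p + (tR - p) = tR by ring]; exact hxr) hyS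
    (by rw [show p + (tR - p) = tR by ring]; exact hyr)
  have hv1 : ∀ n : ℕ, |(h (n + 1) + (tL - p)) - (h n + (tL - p))| + s < (e : ℤ) ∧
      |(h (n + 1) + (tL - p)) - (h n + (tL - p))| - r < (e : ℤ) := by
    intro n
    rw [show (h (n + 1) + (tL - p)) - (h n + (tL - p)) = h (n + 1) - h n by ring]
    exact hvar n
  have hv2 : ∀ n : ℕ, |(h (n + 1) + (tR - p)) - (h n + (tR - p))| + s < (e : ℤ) ∧
      |(h (n + 1) + (tR - p)) - (h n + (tR - p))| - r < (e : ℤ) := by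
    intro n
    rw [show (h (n + 1) + (tR - p)) - (h n + (tR - p)) = h (n + 1) - h n by ring]
    exact hvar n
  have hbase : ∀ q1 : ℤ, h 0 + (tL - p) ≤ q1 → q1 < (h 0 + (tR - p)) + (e : ℤ) →
      x q1 = y q1 := by
    intro q1 hA hB
    exact hagree q1 (by linarith) (by linarith)
  have hcore := core_lemma hF x y (fun n => h n + (tL - p)) (fun n => h n + (tR - p))
    (e : ℤ) (e : ℤ) hv1 hv2 hL hR hbase
  intro n i hik
  obtain ⟨hik1, hik2⟩ := abs_le.mp hik
  exact hcore n (i + h n) (by show h n + (tL - p) ≤ i + h n; linarith)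
    (by show i + h n < h n + (tR - p) + (e : ℤ); linarith)

end Aux

/-- convexity of the set of curves admitting blocking words
(equivalently equicontinuous points): if `h' ≾ h ≾ h''` and there are blocking
words along `h'` and `h''`, then there is one along `h`. -/
theorem stmt8 {A : Type*} [Fintype A] [TopologicalSpace A] [DiscreteTopology A]
    (F : (ℤ → A) → (ℤ → A)) (r s : ℤ) (hF : IsCA F r s)
    (S : Set (ℤ → A)) (hS : IsSubshift S) (htrans : transitiveSubshift S)
    (h' h h'' : ℕ → ℤ) (hb' : BV h') (hb : BV h) (hb'' : BV h'')
    (h1 : precsim h' h) (h2 : precsim h h'')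
    (u' u'' : List A)
    (hw' : blockingWord F S h' r s u') (hw'' : blockingWord F S h'' r s u'') :
    (∃ u : List A, blockingWord F S h r s u) ∧ (∃ x ∈ S, eqPt F S h x) := by
  obtain ⟨hScl, hSinv⟩ := hS
  obtain ⟨u, hu⟩ := exists_blocking hF hSinv htrans hb h1 h2 hw' hw''
  exact ⟨⟨u, hu⟩, eqpt_of_blocking hF hScl hSinv htrans hu⟩
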